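/- arXiv:nlin/0609023 — 5 statements merged into one kernel-verified Lean document; each statement's English description precedes it below -/
import Mathlib

section
/- Let N, K be positive integers, ε > 0, ω > 0 and R > 0. Consider on ℓ²(ℤ^N_K) the functional E_ω[φ] = ε Σ_{ν=1}^N ‖∇ν⁺φ‖₂² + ω Σ_{‖n‖_∞ ≤ K} |φ_n|² and the constraint set B₁ = { φ ∈ ℓ²(ℤ^N_K) : Σ_{‖n‖_∞ ≤ K} log(1 + |φ_n|²) = R }. Then there exist φ̂ ∈ B₁ with E_ω[φ̂] = inf { E_ω[φ] : φ ∈ B₁ } and a real number Λ with Λ > ω, such that −ε(Δ_d φ̂)_n + ω φ̂_n = Λ φ̂_n / (1 + |φ̂_n|²) for all n with ‖n‖_∞ ≤ K (where φ̂_n = 0 for ‖n‖_∞ > K). In particular Σ_{‖n‖_∞ ≤ K} log(1 + |φ̂_n|²) = R and φ̂ ≠ 0. -/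
open scoped BigOperators
noncomputable section

/-- The lattice `ℤ^N`. -/
abbrev Zn (N : ℕ) := Fin N → ℤ

/-- The ν-th standard basis vector of `ℤ^N`. -/
def evec {N : ℕ} (ν : Fin N) : Zn N := fun i => if i = ν then 1 else 0

/-- The discrete Laplacian on `ℤ^N`. -/
def dLap {N : ℕ} (φ : Zn N → ℂ) : Zn N → ℂ :=
  fun n => ∑ ν : Fin N, (φ (n + evec ν) + φ (n - evec ν) - 2 * φ n)

/-- The forward difference operator in direction ν. -/
def fdiff {N : ℕ} (ν : Fin N) (φ : Zn N → ℂ) : Zn N → ℂ :=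
  fun n => φ (n + evec ν) - φ n

/-- `n` lies in the box `‖n‖_∞ ≤ K`. -/
def inBox {N : ℕ} (K : ℕ) (n : Zn N) : Prop := ∀ i, |n i| ≤ (K : ℤ)

/-- `φ` is supported in the box `‖n‖_∞ ≤ K` (i.e. `φ ∈ ℓ²(ℤ^N_K)`). -/
def suppIn {N : ℕ} (K : ℕ) (φ : Zn N → ℂ) : Prop := ∀ n, ¬ inBox K n → φ n = 0

/-- The linear energy functional `E_ω[φ] = ε Σ_ν ‖∇ν⁺φ‖₂² + ω Σ_n |φ_n|²`. -/
def Eomega {N : ℕ} (ε ω : ℝ) (φ : Zn N → ℂ) : ℝ :=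
  ε * ∑ ν : Fin N, ∑' n, ‖fdiff ν φ n‖ ^ 2 + ω * ∑' n, ‖φ n‖ ^ 2

/-- derivative of `z ↦ ‖z‖²` on ℂ as a real CLM. -/
def cD (z : ℂ) : ℂ →L[ℝ] ℝ := (2*z.re) • Complex.reCLM + (2*z.im) • Complex.imCLM

lemma cD_apply (z h : ℂ) : cD z h = 2*z.re*h.re + 2*z.im*h.im := by
  simp [cD]

lemma norm_sq_eq (w : ℂ) : ‖w‖^2 = w.re*w.re + w.im*w.im := by
  rw [Complex.sq_norm, Complex.normSq_apply]

lemma hasStrict_nsq (z : ℂ) : HasStrictFDerivAt (fun w : ℂ => ‖w‖^2) (cD z) z := by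
  simp only [norm_sq_eq]
  have hre : HasStrictFDerivAt (fun w : ℂ => w.re) Complex.reCLM z :=
    Complex.reCLM.hasStrictFDerivAt
  have him : HasStrictFDerivAt (fun w : ℂ => w.im) Complex.imCLM z :=
    Complex.imCLM.hasStrictFDerivAt
  have h := (hre.fun_mul hre).fun_add (him.fun_mul him)
  refine h.congr_fderiv ?_
  ext w
  simp [cD]
  ring

lemma hasStrict_lognsq (z : ℂ) :
    HasStrictFDerivAt (fun w : ℂ => Real.log (1 + ‖w‖^2)) ((1+‖z‖^2)⁻¹ • cD z) z := by
  have h := ((hasStrict_nsq z).const_add 1).log (by positivity)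
  simpa using h

lemma cD_self (z : ℂ) : cD z z = 2*‖z‖^2 := by
  rw [cD_apply, norm_sq_eq]; ring

def box (N K : ℕ) : Finset (Zn N) := Fintype.piFinset fun _ => Finset.Icc (-(K:ℤ)) (K:ℤ)

lemma mem_box {N K : ℕ} {n : Zn N} : n ∈ box N K ↔ inBox K n := by
  simp [box, inBox, Fintype.mem_piFinset, Finset.mem_Icc, abs_le]

lemma abs_evec_le {N : ℕ} (ν : Fin N) (i : Fin N) : |evec ν i| ≤ 1 := by
  unfold evec; split <;> simp

lemma inBox_mono {N : ℕ} {K K' : ℕ} (h : K ≤ K') {n : Zn N} (hn : inBox K n) : inBox K' n :=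
  fun i => le_trans (hn i) (by exact_mod_cast Nat.cast_le.mpr h)

lemma inBox_add {N : ℕ} {K : ℕ} {n : Zn N} (hn : inBox K n) (ν : Fin N) :
    inBox (K+1) (n + evec ν) := by
  intro i
  have h1 := hn i; have h2 := abs_evec_le ν i
  have := abs_add_le (n i) (evec ν i)
  simp only [Pi.add_apply]
  push_cast
  omega

lemma inBox_sub {N : ℕ} {K : ℕ} {n : Zn N} (hn : inBox K n) (ν : Fin N) :
    inBox (K+1) (n - evec ν) := by
  intro i
  have h1 := hn i; have h2 := abs_evec_le ν i
  have := abs_sub (n i) (evec ν i)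
  simp only [Pi.sub_apply]
  have := abs_sub_abs_le_abs_sub (n i) (evec ν i)
  push_cast
  omega

variable {N K : ℕ}

/-- coordinate / extension CLM -/
def coordL (N K : ℕ) (n : Zn N) : (↥(box N K) → ℂ) →L[ℝ] ℂ :=
  if h : n ∈ box N K then ContinuousLinearMap.proj (⟨n, h⟩ : ↥(box N K)) else 0

def extK (v : ↥(box N K) → ℂ) : Zn N → ℂ := fun n => coordL N K n v

lemma extK_of_mem {v : ↥(box N K) → ℂ} {n : Zn N} (h : n ∈ box N K) :
    extK v n = v ⟨n, h⟩ := by simp [extK, coordL, h]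

lemma extK_of_not_mem {v : ↥(box N K) → ℂ} {n : Zn N} (h : n ∉ box N K) :
    extK v n = 0 := by simp [extK, coordL, h]

lemma extK_coe (v : ↥(box N K) → ℂ) (b : ↥(box N K)) :
    extK v (↑b) = v b := by rw [extK_of_mem b.2]

lemma suppIn_extK (v : ↥(box N K) → ℂ) : suppIn K (extK v) := by
  intro n hn
  exact extK_of_not_mem (fun h => hn (mem_box.mp h))

lemma extK_restrict {φ : Zn N → ℂ} (h : suppIn K φ) :
    extK (fun b : ↥(box N K) => φ ↑b) = φ := by
  funext n
  by_cases hn : n ∈ box N K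
  · rw [extK_of_mem hn]
  · rw [extK_of_not_mem hn, h n (fun hb => hn (mem_box.mpr hb))]

def DL (N K : ℕ) (ν : Fin N) (n : Zn N) : (↥(box N K) → ℂ) →L[ℝ] ℂ :=
  coordL N K (n + evec ν) - coordL N K n

lemma DL_apply (ν : Fin N) (n : Zn N) (v : ↥(box N K) → ℂ) :
    DL N K ν n v = fdiff ν (extK v) n := rfl

lemma coordL_single (n : Zn N) (b : ↥(box N K)) (h : ℂ) :
    coordL N K n (Pi.single b h) = if n = ↑b then h else 0 := by
  unfold coordL
  split
  · rename_i hn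
    rw [ContinuousLinearMap.proj_apply, Pi.single_apply]
    simp [Subtype.ext_iff]
  · rename_i hn
    have : n ≠ ↑b := fun he => hn (he ▸ b.2)
    simp [this]

def GK (N K : ℕ) (v : ↥(box N K) → ℂ) : ℝ := ∑ b : ↥(box N K), Real.log (1 + ‖v b‖^2)

def FK (N K : ℕ) (ε ω : ℝ) (v : ↥(box N K) → ℂ) : ℝ :=
  ε * ∑ ν : Fin N, ∑ n ∈ box N (K+1), ‖DL N K ν n v‖^2 + ω * ∑ b : ↥(box N K), ‖v b‖^2

lemma fdiff_supp {φ : Zn N → ℂ} (h : suppIn K φ) (ν : Fin N) {n : Zn N}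
    (hn : n ∉ box N (K+1)) : fdiff ν φ n = 0 := by
  have hn' : ¬ inBox (K+1) n := fun hb => hn (mem_box.mpr hb)
  have h1 : ¬ inBox K n := fun hb => hn' (inBox_mono (Nat.le_succ K) hb)
  have h2 : ¬ inBox K (n + evec ν) := by
    intro hb
    have := inBox_sub hb ν
    rw [add_sub_cancel_right] at this
    exact hn' this
  rw [fdiff, h n h1, h _ h2, sub_zero]

lemma tsum_sq_eq {φ : Zn N → ℂ} (h : suppIn K φ) :
    ∑' n, ‖φ n‖^2 = ∑ b : ↥(box N K), ‖φ ↑b‖^2 := by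
  rw [tsum_eq_sum (s := box N K) (fun n hn => by
    rw [h n (fun hb => hn (mem_box.mpr hb))]; simp)]
  exact (Finset.sum_coe_sort (box N K) (fun n => ‖φ n‖^2)).symm

lemma tsum_log_eq {φ : Zn N → ℂ} (h : suppIn K φ) :
    ∑' n, Real.log (1 + ‖φ n‖^2) = ∑ b : ↥(box N K), Real.log (1 + ‖φ ↑b‖^2) := by
  rw [tsum_eq_sum (s := box N K) (fun n hn => by
    rw [h n (fun hb => hn (mem_box.mpr hb))]; simp)]
  exact (Finset.sum_coe_sort (box N K) _).symm

lemma tsum_fdiff_eq {φ : Zn N → ℂ} (h : suppIn K φ) (ν : Fin N) :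
    ∑' n, ‖fdiff ν φ n‖^2 = ∑ n ∈ box N (K+1), ‖fdiff ν φ n‖^2 :=
  tsum_eq_sum (fun n hn => by rw [fdiff_supp h ν hn]; simp)

lemma Eomega_eq {φ : Zn N → ℂ} (h : suppIn K φ) (ε ω : ℝ) :
    Eomega ε ω φ = FK N K ε ω (fun b => φ ↑b) := by
  unfold Eomega FK
  rw [tsum_sq_eq h]
  congr 1
  congr 1
  refine Finset.sum_congr rfl fun ν _ => ?_
  rw [tsum_fdiff_eq h ν]
  refine Finset.sum_congr rfl fun n _ => ?_
  rw [DL_apply, extK_restrict h]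


lemma hasStrict_proj (b : ↥(box N K)) (v : ↥(box N K) → ℂ) :
    HasStrictFDerivAt (fun y : ↥(box N K) → ℂ => y b)
      (ContinuousLinearMap.proj b (R := ℝ)) v :=
  (ContinuousLinearMap.proj b (R := ℝ) (φ := fun _ : ↥(box N K) => ℂ)).hasStrictFDerivAt

def GK' (N K : ℕ) (v : ↥(box N K) → ℂ) : (↥(box N K) → ℂ) →L[ℝ] ℝ :=
  ∑ b : ↥(box N K), ((1 + ‖v b‖^2)⁻¹ • cD (v b)).comp (ContinuousLinearMap.proj b)

lemma hasStrict_GK (v : ↥(box N K) → ℂ) : HasStrictFDerivAt (GK N K) (GK' N K v) v := by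
  apply HasStrictFDerivAt.fun_sum
  intro b _
  exact (hasStrict_lognsq (v b)).comp v (hasStrict_proj b v)

def FK' (N K : ℕ) (ε ω : ℝ) (v : ↥(box N K) → ℂ) : (↥(box N K) → ℂ) →L[ℝ] ℝ :=
  ε • (∑ ν : Fin N, ∑ n ∈ box N (K+1), (cD (DL N K ν n v)).comp (DL N K ν n))
  + ω • (∑ b : ↥(box N K), (cD (v b)).comp (ContinuousLinearMap.proj b))

lemma hasStrict_FK (ε ω : ℝ) (v : ↥(box N K) → ℂ) :
    HasStrictFDerivAt (FK N K ε ω) (FK' N K ε ω v) v := by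
  have h1 : HasStrictFDerivAt
      (fun v : ↥(box N K) → ℂ => ∑ ν : Fin N, ∑ n ∈ box N (K+1), ‖DL N K ν n v‖^2)
      (∑ ν : Fin N, ∑ n ∈ box N (K+1), (cD (DL N K ν n v)).comp (DL N K ν n)) v := by
    apply HasStrictFDerivAt.fun_sum
    intro ν _
    apply HasStrictFDerivAt.fun_sum
    intro n _
    exact (hasStrict_nsq (DL N K ν n v)).comp v (DL N K ν n).hasStrictFDerivAt
  have h2 : HasStrictFDerivAt
      (fun v : ↥(box N K) → ℂ => ∑ b : ↥(box N K), ‖v b‖^2)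
      (∑ b : ↥(box N K), (cD (v b)).comp (ContinuousLinearMap.proj b)) v := by
    apply HasStrictFDerivAt.fun_sum
    intro b _
    exact (hasStrict_nsq (v b)).comp v (hasStrict_proj b v)
  exact (h1.const_mul ε).add (h2.const_mul ω)

lemma GK'_apply (v w : ↥(box N K) → ℂ) :
    GK' N K v w = ∑ b : ↥(box N K), (1 + ‖v b‖^2)⁻¹ * cD (v b) (w b) := by
  simp [GK']

lemma FK'_apply (ε ω : ℝ) (v w : ↥(box N K) → ℂ) :
    FK' N K ε ω v w
      = ε * ∑ ν : Fin N, ∑ n ∈ box N (K+1), cD (DL N K ν n v) (DL N K ν n w)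
        + ω * ∑ b : ↥(box N K), cD (v b) (w b) := by
  simp [FK', Finset.mul_sum]

lemma cD_add_left (a b h : ℂ) : cD (a + b) h = cD a h + cD b h := by
  simp [cD_apply]; ring
lemma cD_sub_left (a b h : ℂ) : cD (a - b) h = cD a h - cD b h := by
  simp [cD_apply]; ring
lemma cD_real_mul (r : ℝ) (z h : ℂ) : cD ((r:ℂ) * z) h = r * cD z h := by
  simp [cD_apply, Complex.mul_re, Complex.mul_im]; ring
lemma cD_sum_left {ι : Type*} (s : Finset ι) (z : ι → ℂ) (h : ℂ) :
    ∑ i ∈ s, cD (z i) h = cD (∑ i ∈ s, z i) h := by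
  classical
  induction s using Finset.induction_on with
  | empty => simp [cD_apply]
  | insert a s' hx ih => simp [Finset.sum_insert hx, cD_add_left, ih]

lemma cD_eq_zero_of_forall {z : ℂ} (h : ∀ w, cD z w = 0) : z = 0 := by
  have := h z
  rw [cD_self] at this
  have h2 : ‖z‖ = 0 := by nlinarith [sq_nonneg ‖z‖]
  simpa using h2

lemma GK'_single (v : ↥(box N K) → ℂ) (b : ↥(box N K)) (h : ℂ) :
    GK' N K v (Pi.single b h) = (1 + ‖v b‖^2)⁻¹ * cD (v b) h := by
  rw [GK'_apply]
  rw [Fintype.sum_eq_single b (fun b' hb' => by simp [Pi.single_eq_of_ne hb'])]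
  simp

lemma DL_single {n₀ : Zn N} (hn₀ : n₀ ∈ box N K) (ν : Fin N) (n : Zn N) (h : ℂ) :
    DL N K ν n (Pi.single (⟨n₀, hn₀⟩ : ↥(box N K)) h)
      = (if n + evec ν = n₀ then h else 0) - (if n = n₀ then h else 0) := by
  rw [DL, ContinuousLinearMap.sub_apply, coordL_single, coordL_single]

lemma FK'_single (ε ω : ℝ) (v : ↥(box N K) → ℂ) {n₀ : Zn N} (hn₀ : n₀ ∈ box N K) (h : ℂ) :
    FK' N K ε ω v (Pi.single (⟨n₀, hn₀⟩ : ↥(box N K)) h)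
      = cD (-(ε:ℂ) * dLap (extK v) n₀ + (ω:ℂ) * extK v n₀) h := by
  rw [FK'_apply]
  have hb2 : n₀ ∈ box N (K+1) := mem_box.mpr (inBox_mono (Nat.le_succ K) (mem_box.mp hn₀))
  have hωpart : ∑ b : ↥(box N K), cD (v b) ((Pi.single (⟨n₀, hn₀⟩ : ↥(box N K)) h : ↥(box N K) → ℂ) b)
      = cD (v ⟨n₀, hn₀⟩) h := by
    rw [Fintype.sum_eq_single (⟨n₀, hn₀⟩ : ↥(box N K))
      (fun b' hb' => by simp [Pi.single_eq_of_ne hb'])]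
    simp
  have hinner : ∀ ν : Fin N,
      ∑ n ∈ box N (K+1), cD (DL N K ν n v) (DL N K ν n (Pi.single (⟨n₀, hn₀⟩ : ↥(box N K)) h))
      = cD (DL N K ν (n₀ - evec ν) v - DL N K ν n₀ v) h := by
    intro ν
    have hsub : n₀ - evec ν ∈ box N (K+1) := mem_box.mpr (inBox_sub (mem_box.mp hn₀) ν)
    have : ∀ n ∈ box N (K+1),
        cD (DL N K ν n v) (DL N K ν n (Pi.single (⟨n₀, hn₀⟩ : ↥(box N K)) h))
        = (if n = n₀ - evec ν then cD (DL N K ν n v) h else 0)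
          - (if n = n₀ then cD (DL N K ν n v) h else 0) := by
      intro n _
      rw [DL_single hn₀, map_sub, apply_ite (cD (DL N K ν n v)), apply_ite (cD (DL N K ν n v)),
        map_zero]
      congr 2
      exact propext ⟨fun hh => by rw [← hh, add_sub_cancel_right], fun hh => by rw [hh, sub_add_cancel]⟩
    rw [Finset.sum_congr rfl this, Finset.sum_sub_distrib,
      Finset.sum_ite_eq' (box N (K+1)) (n₀ - evec ν), Finset.sum_ite_eq' (box N (K+1)) n₀,
      if_pos hsub, if_pos hb2, ← cD_sub_left]
  rw [Finset.sum_congr rfl (fun ν _ => hinner ν), hωpart, cD_sum_left]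
  have hkey : ∑ ν : Fin N, (DL N K ν (n₀ - evec ν) v - DL N K ν n₀ v)
      = - dLap (extK v) n₀ := by
    rw [dLap, ← Finset.sum_neg_distrib]
    refine Finset.sum_congr rfl fun ν _ => ?_
    rw [DL_apply, DL_apply, fdiff, fdiff, sub_add_cancel]
    ring
  rw [hkey]
  rw [show ω * cD (v ⟨n₀, hn₀⟩) h = cD ((ω:ℂ) * extK v n₀) h by
    rw [cD_real_mul, extK_of_mem hn₀]]
  rw [show ε * cD (-dLap (extK v) n₀) h = cD ((ε:ℂ) * -dLap (extK v) n₀) h from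
    (cD_real_mul ε _ h).symm]
  rw [← cD_add_left]
  congr 1
  ring

set_option maxHeartbeats 1000000 in
/-- Constrained minimization problem A.I for the defocusing saturable DNLS:
existence of a minimizer of `E_ω` on `B₁` and of a Lagrange multiplier `Λ > ω`
solving the Euler–Lagrange equation. -/
theorem exists_minimizer_Eomega {N K : ℕ} (hN : 0 < N) (hK : 0 < K)
    (ε ω R : ℝ) (hε : 0 < ε) (hω : 0 < ω) (hR : 0 < R) :
    ∃ (φ : Zn N → ℂ) (Λ : ℝ),
      suppIn K φ ∧
      (∑' n, Real.log (1 + ‖φ n‖ ^ 2)) = R ∧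
      (∀ ψ : Zn N → ℂ, suppIn K ψ → (∑' n, Real.log (1 + ‖ψ n‖ ^ 2)) = R →
        Eomega ε ω φ ≤ Eomega ε ω ψ) ∧
      ω < Λ ∧
      (∀ n : Zn N, inBox K n →
        -(ε : ℂ) * dLap φ n + (ω : ℂ) * φ n
          = (Λ : ℂ) * φ n / ((1 + ‖φ n‖ ^ 2 : ℝ) : ℂ)) ∧
      φ ≠ 0 := by
  classical
  -- nonemptiness of the constraint set
  have hexp : (1:ℝ) < Real.exp R := by nlinarith [Real.add_one_le_exp R]
  set c : ℝ := Real.sqrt (Real.exp R - 1) with hcdef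
  have hc0 : 0 < c := Real.sqrt_pos.mpr (by linarith)
  have hc2 : c^2 = Real.exp R - 1 := Real.sq_sqrt (by linarith)
  have h0box : (0 : Zn N) ∈ box N K := mem_box.mpr (fun i => by simp)
  set b₀ : ↥(box N K) := ⟨0, h0box⟩ with hb₀def
  set v₀ : ↥(box N K) → ℂ := Pi.single b₀ (c:ℂ) with hv₀def
  have hGv₀ : GK N K v₀ = R := by
    rw [GK, Fintype.sum_eq_single b₀ (fun b hb => by
      simp [hv₀def, Pi.single_eq_of_ne hb])]
    have : ‖v₀ b₀‖^2 = c^2 := by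
      simp [hv₀def, Complex.norm_real, abs_of_pos hc0]
    rw [this, hc2]
    rw [show (1:ℝ) + (Real.exp R - 1) = Real.exp R by ring, Real.log_exp]
  -- compactness of the constraint set
  have hGcont : Continuous (GK N K) :=
    continuous_iff_continuousAt.mpr fun v => (hasStrict_GK v).continuousAt
  have hFcont : Continuous (FK N K ε ω) :=
    continuous_iff_continuousAt.mpr fun v => (hasStrict_FK ε ω v).continuousAt
  set C : Set (↥(box N K) → ℂ) := {v | GK N K v = R} with hCdef
  have hCclosed : IsClosed C := isClosed_eq hGcont continuous_const
  have hsub : C ⊆ Metric.closedBall 0 c := by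
    intro v hv
    rw [Metric.mem_closedBall, dist_zero_right, pi_norm_le_iff_of_nonneg hc0.le]
    intro b
    have hterm : Real.log (1 + ‖v b‖^2) ≤ R := by
      rw [← hv]
      exact Finset.single_le_sum (f := fun b => Real.log (1 + ‖v b‖^2))
        (fun b' _ => Real.log_nonneg (by nlinarith [sq_nonneg ‖v b'‖])) (Finset.mem_univ b)
    have h1 : 1 + ‖v b‖^2 ≤ Real.exp R := by
      calc 1 + ‖v b‖^2 = Real.exp (Real.log (1 + ‖v b‖^2)) :=
            (Real.exp_log (by positivity)).symm
        _ ≤ Real.exp R := Real.exp_le_exp.mpr hterm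
    have h2 : ‖v b‖^2 ≤ c^2 := by rw [hc2]; linarith
    calc ‖v b‖ = Real.sqrt (‖v b‖^2) := (Real.sqrt_sq (norm_nonneg _)).symm
      _ ≤ Real.sqrt (c^2) := Real.sqrt_le_sqrt h2
      _ = c := Real.sqrt_sq hc0.le
  have hCcomp : IsCompact C :=
    (isCompact_closedBall (0 : ↥(box N K) → ℂ) c).of_isClosed_subset hCclosed hsub
  -- minimizer
  obtain ⟨vh, hvhC, hmin⟩ := hCcomp.exists_isMinOn ⟨v₀, hGv₀⟩ hFcont.continuousOn
  have hGvh : GK N K vh = R := hvhC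
  -- Lagrange multipliers
  have hextr : IsLocalExtrOn (FK N K ε ω) {v | GK N K v = GK N K vh} vh := by
    have hset : {v | GK N K v = GK N K vh} = C := by rw [hGvh]
    rw [hset]
    exact hmin.isExtr.localize
  obtain ⟨a, bb, hab, hcomb⟩ := hextr.exists_multipliers_of_hasStrictFDerivAt_1d
    (hasStrict_GK vh) (hasStrict_FK ε ω vh)
  have hpt : ∀ w, a * GK' N K vh w + bb * FK' N K ε ω vh w = 0 := by
    intro w
    have := DFunLike.congr_fun hcomb w
    simpa [smul_eq_mul] using this
  -- a nonzero coordinate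
  have hvh_ne : ∃ b, vh b ≠ 0 := by
    by_contra hall
    push_neg at hall
    have : GK N K vh = 0 := by simp [GK, hall]
    rw [hGvh] at this
    linarith
  obtain ⟨b₁, hb₁⟩ := hvh_ne
  have hs1 : 0 < ‖vh b₁‖^2 := pow_pos (norm_pos_iff.mpr hb₁) 2
  -- bb ≠ 0
  have hGpos : 0 < GK' N K vh (Pi.single b₁ (vh b₁)) := by
    rw [GK'_single, cD_self]
    have h1 : 0 < (1 + ‖vh b₁‖^2)⁻¹ := by positivity
    nlinarith
  have hbb : bb ≠ 0 := by
    intro h0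
    have ha : a ≠ 0 := by
      intro ha0
      exact hab (by simp [h0, ha0, Prod.ext_iff])
    have := hpt (Pi.single b₁ (vh b₁))
    rw [h0] at this
    simp at this
    rcases this with h | h
    · exact ha h
    · linarith
  set μ : ℝ := -a / bb with hμdef
  have hμ : ∀ w, FK' N K ε ω vh w = μ * GK' N K vh w := by
    intro w
    have h := hpt w
    rw [hμdef]
    field_simp
    linarith [hpt w]
  -- Λ > ω
  set S : ℝ := ∑ b : ↥(box N K), (1 + ‖vh b‖^2)⁻¹ * ‖vh b‖^2 with hSdef
  have hGvv : GK' N K vh vh = 2 * S := by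
    rw [GK'_apply, hSdef, Finset.mul_sum]
    refine Finset.sum_congr rfl fun b _ => ?_
    rw [cD_self]
    ring
  have hFvv : FK' N K ε ω vh vh = 2 * FK N K ε ω vh := by
    rw [FK'_apply, FK]
    simp only [cD_self, ← Finset.mul_sum]
    ring
  have hSpos : 0 < S := by
    rw [hSdef]
    refine Finset.sum_pos' (fun b _ => by positivity) ⟨b₁, Finset.mem_univ b₁, ?_⟩
    have h1 : 0 < (1 + ‖vh b₁‖^2)⁻¹ := by positivity
    nlinarith
  have hFK_eq : FK N K ε ω vh = μ * S := by
    have := hμ vh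
    rw [hGvv, hFvv] at this
    linarith
  have hTS : S < ∑ b : ↥(box N K), ‖vh b‖^2 := by
    rw [hSdef]
    refine Finset.sum_lt_sum (fun b _ => ?_) ⟨b₁, Finset.mem_univ b₁, ?_⟩
    · have h1 : (1 + ‖vh b‖^2)⁻¹ ≤ 1 := by
        rw [inv_le_one_iff₀]; right; nlinarith [sq_nonneg ‖vh b‖]
      nlinarith [sq_nonneg ‖vh b‖]
    · have h1 : (1 + ‖vh b₁‖^2)⁻¹ < 1 := by
        rw [inv_lt_one_iff₀]; right; nlinarith
      nlinarith
  have hFK_ge : ω * ∑ b : ↥(box N K), ‖vh b‖^2 ≤ FK N K ε ω vh := by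
    rw [FK]
    have h0 : 0 ≤ ∑ ν : Fin N, ∑ n ∈ box N (K+1), ‖DL N K ν n vh‖^2 :=
      Finset.sum_nonneg fun ν _ => Finset.sum_nonneg fun n _ => sq_nonneg _
    nlinarith
  have hμω : ω < μ := by
    have h1 : ω * S < FK N K ε ω vh := lt_of_lt_of_le (by nlinarith) hFK_ge
    rw [hFK_eq] at h1
    exact lt_of_mul_lt_mul_right (by linarith) hSpos.le
  -- conclusion
  refine ⟨extK vh, μ, suppIn_extK vh, ?_, ?_, hμω, ?_, ?_⟩
  · rw [tsum_log_eq (suppIn_extK vh)]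
    rw [← hGvh, GK]
    exact Finset.sum_congr rfl fun b _ => by rw [extK_coe]
  · intro ψ hψ hψR
    rw [Eomega_eq (suppIn_extK vh), Eomega_eq hψ]
    have h1 : (fun b : ↥(box N K) => extK vh ↑b) = vh := funext (extK_coe vh)
    rw [h1]
    apply hmin
    show GK N K (fun b => ψ ↑b) = R
    rw [← hψR, tsum_log_eq hψ, GK]
  · intro n hn
    have hnb : n ∈ box N K := mem_box.mpr hn
    set φ := extK vh with hφdef
    have hkey : ∀ h : ℂ, cD (-(ε:ℂ) * dLap φ n + (ω:ℂ) * φ n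
        - ((μ * (1 + ‖φ n‖^2)⁻¹ : ℝ) : ℂ) * φ n) h = 0 := by
      intro h
      rw [cD_sub_left]
      have hL := FK'_single ε ω vh hnb h
      have hR := GK'_single vh ⟨n, hnb⟩ h
      have := hμ (Pi.single (⟨n, hnb⟩ : ↥(box N K)) h)
      rw [hL, hR] at this
      rw [this]
      have hv : vh ⟨n, hnb⟩ = φ n := (extK_of_mem hnb).symm
      rw [show ((μ * (1 + ‖φ n‖^2)⁻¹ : ℝ) : ℂ) * φ n
          = (μ:ℂ) * (((1 + ‖φ n‖^2)⁻¹ : ℝ) : ℂ) * φ n by push_cast; ring]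
      rw [mul_assoc, cD_real_mul, cD_real_mul, hv]
      ring
    have hEL : -(ε:ℂ) * dLap φ n + (ω:ℂ) * φ n
        = ((μ * (1 + ‖φ n‖^2)⁻¹ : ℝ) : ℂ) * φ n := by
      have := cD_eq_zero_of_forall hkey
      linear_combination this
    rw [hEL]
    rw [show ((μ * (1 + ‖φ n‖^2)⁻¹ : ℝ) : ℂ) = (μ:ℂ) / ((1 + ‖φ n‖^2 : ℝ) : ℂ) by
      push_cast; ring]
    ring
  · intro h0
    apply hb₁
    have := congrFun h0 ↑b₁
    rwa [extK_coe] at this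
end
end

section
/- Let N be a positive integer, ε > 0, and let β, Ω satisfy β > Ω > 0. Fix an integer m ≥ 1, set δ = β − Ω and L(R) = Σ_{j=1}^m (2j+1) R^{2j} + (2m+3) R^{2(m+1)} + 2 R^{2(m+2)}, and let R_* > 0 be the unique positive root of L(R) = δ/β. Then every φ ∈ ℓ²(ℤ^N) with φ ≠ 0 satisfying −ε(Δ_d φ)_n − Ω φ_n = −β φ_n / (1 + |φ_n|²) for all n ∈ ℤ^N has power ‖φ‖₂² ≥ R_*²; equivalently, if φ ∈ ℓ²(ℤ^N) satisfies this equation and ‖φ‖₂ < R_*, then φ = 0. -/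
open scoped BigOperators
noncomputable section

/-- The polynomial `L(R) = Σ_{j=1}^m (2j+1)R^{2j} + (2m+3)R^{2(m+1)} + 2R^{2(m+2)}`
arising as local Lipschitz constant of the saturable nonlinearity. -/
def Lpoly (m : ℕ) (R : ℝ) : ℝ :=
  (∑ j ∈ Finset.Icc 1 m, (2 * j + 1 : ℝ) * R ^ (2 * j))
    + (2 * m + 3 : ℝ) * R ^ (2 * (m + 1)) + 2 * R ^ (2 * (m + 2))

/-- Threshold on the power of breather solutions of the focusing saturable DNLS
on the infinite lattice (fixed point argument): any nontrivial solution of the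
stationary equation has power at least `R_*²`, where `R_*` is the positive root
of `L(R) = δ/β`, `δ = β − Ω`. -/
theorem power_threshold_saturable {N : ℕ} (hN : 0 < N)
    (ε β Ω : ℝ) (hε : 0 < ε) (hΩ : 0 < Ω) (hβΩ : Ω < β)
    (m : ℕ) (hm : 1 ≤ m)
    (Rs : ℝ) (hRs : 0 < Rs) (hroot : Lpoly m Rs = (β - Ω) / β)
    (φ : Zn N → ℂ) (hφ : Summable fun n => ‖φ n‖ ^ 2)
    (heq : ∀ n : Zn N,
      -(ε : ℂ) * dLap φ n - (Ω : ℂ) * φ n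
        = -(β : ℂ) * φ n / ((1 + ‖φ n‖ ^ 2 : ℝ) : ℂ))
    (hne : φ ≠ 0) :
    Rs ^ 2 ≤ ∑' n, ‖φ n‖ ^ 2 := by
  -- there is a nonzero point
  obtain ⟨n₁, hn₁⟩ : ∃ n, φ n ≠ 0 := by
    by_contra h
    push_neg at h
    exact hne (funext h)
  have hpos1 : 0 < ‖φ n₁‖ ^ 2 := pow_pos (norm_pos_iff.mpr hn₁) 2
  -- the set where the value is at least ‖φ n₁‖² is finite
  have hev : ∀ᶠ n in Filter.cofinite, ‖φ n‖ ^ 2 < ‖φ n₁‖ ^ 2 :=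
    hφ.tendsto_cofinite_zero.eventually (eventually_lt_nhds hpos1)
  have hfin : {n : Zn N | ¬ ‖φ n‖ ^ 2 < ‖φ n₁‖ ^ 2}.Finite :=
    Filter.eventually_cofinite.mp hev
  have hmem : n₁ ∈ {n : Zn N | ¬ ‖φ n‖ ^ 2 < ‖φ n₁‖ ^ 2} := by simp
  obtain ⟨n₀, hn₀S, hn₀max⟩ :=
    Set.Finite.exists_maximalFor (fun n => ‖φ n‖ ^ 2) _ hfin ⟨n₁, hmem⟩
  -- n₀ is a global maximizer
  have hmax : ∀ n, ‖φ n‖ ^ 2 ≤ ‖φ n₀‖ ^ 2 := by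
    intro n
    by_cases hn : n ∈ {n : Zn N | ¬ ‖φ n‖ ^ 2 < ‖φ n₁‖ ^ 2}
    · by_contra hlt
      push_neg at hlt
      exact absurd (hn₀max hn hlt.le) (not_le.mpr hlt)
    · simp only [Set.mem_setOf_eq, not_not] at hn
      exact hn.le.trans (not_lt.mp hn₀S)
  have ht0 : 0 < ‖φ n₀‖ ^ 2 := lt_of_lt_of_le hpos1 (not_lt.mp hn₀S)
  have E := heq n₀
  set t : ℝ := ‖φ n₀‖ ^ 2 with htdef
  set c : ℂ := φ n₀ with hcdef
  have ht1 : (0:ℝ) < 1 + t := by linarith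
  have hd : (1 + (t:ℂ)) ≠ 0 := by
    have : ((1 + t : ℝ) : ℂ) ≠ 0 := by exact_mod_cast ne_of_gt ht1
    push_cast at this
    exact this
  have hc : c * (starRingEnd ℂ) c = ((t : ℝ) : ℂ) := by
    rw [Complex.mul_conj]
    norm_cast
    simp [htdef, Complex.normSq_eq_norm_sq]

  push_cast at E
  have E' : (-(ε:ℂ) * dLap φ n₀ - (Ω:ℂ) * c) * (1 + (t:ℂ)) = -(β:ℂ) * c := by
    rw [E]
    field_simp
  -- key identity from the equation at n₀
  have h1 : (ε : ℂ) * (dLap φ n₀ * (starRingEnd ℂ) c) * (1 + (t:ℂ))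
      = ((β:ℂ) - (Ω:ℂ) * (1 + (t:ℂ))) * ((t:ℝ):ℂ) := by
    linear_combination (-(starRingEnd ℂ) c) * E'
      + ((β:ℂ) - (Ω:ℂ) * (1 + (t:ℂ))) * hc
  have hre : ε * (dLap φ n₀ * (starRingEnd ℂ) c).re * (1 + t)
      = (β - Ω * (1 + t)) * t := by
    have h2 := congrArg Complex.re h1
    simp only [Complex.mul_re, Complex.mul_im, Complex.add_re, Complex.add_im,
      Complex.sub_re, Complex.sub_im, Complex.one_re, Complex.one_im,
      Complex.ofReal_re, Complex.ofReal_im, mul_zero, zero_mul, sub_zero,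
      add_zero, zero_add, mul_one, one_mul] at h2
    rw [Complex.mul_re]
    linear_combination h2
  -- the Laplacian term is nonpositive at a maximizer
  have hzc : ∀ z : ℂ, (z * (starRingEnd ℂ) c).re ≤ ‖z‖ * ‖c‖ := by
    intro z
    calc (z * (starRingEnd ℂ) c).re ≤ ‖z * (starRingEnd ℂ) c‖ :=
          Complex.re_le_norm _
      _ = ‖z‖ * ‖c‖ := by
          simp [Complex.norm_conj]
  have hA : (dLap φ n₀ * (starRingEnd ℂ) c).re ≤ 0 := by
    rw [dLap, Finset.sum_mul, Complex.re_sum]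
    apply Finset.sum_nonpos
    intro ν _
    have h₁ := hzc (φ (n₀ + evec ν))
    have h₂ := hzc (φ (n₀ - evec ν))
    have hb₁ : ‖φ (n₀ + evec ν)‖ ^ 2 ≤ t := hmax _
    have hb₂ : ‖φ (n₀ - evec ν)‖ ^ 2 ≤ t := hmax _
    have hsplit : (φ (n₀ + evec ν) + φ (n₀ - evec ν) - 2 * c) * (starRingEnd ℂ) c
        = φ (n₀ + evec ν) * (starRingEnd ℂ) c
          + φ (n₀ - evec ν) * (starRingEnd ℂ) c - 2 * (c * (starRingEnd ℂ) c) := by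
      ring
    rw [hsplit, hc, Complex.sub_re, Complex.add_re]
    have h2t : ((2:ℂ) * ((t:ℝ):ℂ)).re = 2 * t := by simp
    rw [h2t]
    nlinarith [sq_nonneg (‖φ (n₀ + evec ν)‖ - ‖c‖),
      sq_nonneg (‖φ (n₀ - evec ν)‖ - ‖c‖), norm_nonneg (φ (n₀ + evec ν)),
      norm_nonneg (φ (n₀ - evec ν)), norm_nonneg c, htdef]
  -- hence β ≤ Ω(1+t), i.e. t ≥ (β-Ω)/Ω
  have hineq : (β - Ω * (1 + t)) * t ≤ 0 := by
    rw [← hre]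
    exact mul_nonpos_of_nonpos_of_nonneg
      (mul_nonpos_of_nonneg_of_nonpos hε.le hA) ht1.le
  have htlb : (β - Ω) / Ω ≤ t := by
    have hkey : β - Ω * (1 + t) ≤ 0 := by
      by_contra h
      push_neg at h
      nlinarith
    rw [div_le_iff₀ hΩ]
    nlinarith
  -- Rs² ≤ (β-Ω)/Ω using the root equation
  have h1m : (1 : ℕ) ∈ Finset.Icc 1 m := by simp [hm]
  have hsum : 3 * Rs ^ 2 ≤ ∑ j ∈ Finset.Icc 1 m, (2 * j + 1 : ℝ) * Rs ^ (2 * j) := by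
    calc 3 * Rs ^ 2 = (2 * (1:ℕ) + 1 : ℝ) * Rs ^ (2 * 1) := by norm_num
      _ ≤ _ := Finset.single_le_sum
          (f := fun j : ℕ => (2 * j + 1 : ℝ) * Rs ^ (2 * j))
          (fun j _ => by positivity) h1m
  have hL : 3 * Rs ^ 2 ≤ Lpoly m Rs := by
    unfold Lpoly
    have hp1 : (0:ℝ) < Rs ^ (2 * (m + 1)) := pow_pos hRs _
    have hp2 : (0:ℝ) < Rs ^ (2 * (m + 2)) := pow_pos hRs _
    have hm3 : (0:ℝ) ≤ (2 * m + 3 : ℝ) := by positivity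
    nlinarith
  have hRs2 : Rs ^ 2 ≤ (β - Ω) / Ω := by
    rw [hroot] at hL
    have hβ : (0:ℝ) < β := lt_trans hΩ hβΩ
    rw [le_div_iff₀ hΩ]
    have h3 : 3 * Rs ^ 2 * β ≤ β - Ω := by
      rw [← le_div_iff₀ hβ]; linarith
    nlinarith [sq_nonneg Rs]
  -- conclude
  have hle := Summable.le_tsum hφ n₀ (fun _ _ => sq_nonneg _)
  calc Rs ^ 2 ≤ (β - Ω) / Ω := hRs2
    _ ≤ t := htlb
    _ ≤ ∑' n, ‖φ n‖ ^ 2 := hle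
end
end

section
/- Let N be a positive integer, m ≥ 1 an integer, and R > 0. Define T : ℂ → ℂ by T(z) = |z|^{2(m+1)} z / (1 + |z|²). For all ζ, ξ ∈ ℓ²(ℤ^N) with ‖ζ‖₂ ≤ R and ‖ξ‖₂ ≤ R, one has Σ_{n∈ℤ^N} |T(ζ_n) − T(ξ_n)|² ≤ [ (2m+3) R^{2m+2} + 2 R^{2m+4} ]² Σ_{n∈ℤ^N} |ζ_n − ξ_n|². -/
open scoped BigOperators
noncomputable section

/-- The remainder term `T(z) = |z|^{2(m+1)} z / (1+|z|²)` of the order-`m`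
Taylor expansion of the saturable nonlinearity. -/
def Trem (m : ℕ) (z : ℂ) : ℂ :=
  ((‖z‖ ^ (2 * (m + 1)) : ℝ) : ℂ) * z / ((1 + ‖z‖ ^ 2 : ℝ) : ℂ)

def gsat (m : ℕ) (t : ℝ) : ℝ := t ^ (m + 1) / (1 + t)

lemma gsat_hasDerivAt (m : ℕ) {t : ℝ} (ht : 0 ≤ t) :
    HasDerivAt (gsat m)
      (((((m : ℝ) + 1) * t ^ m * (1 + t) - t ^ (m + 1))) / (1 + t) ^ 2) t := by
  have h1 : (1 : ℝ) + t ≠ 0 := by positivity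
  have h := (hasDerivAt_pow (m + 1) t).div
    ((hasDerivAt_const t (1 : ℝ)).add (hasDerivAt_id t)) h1
  refine h.congr_deriv ?_ |>.congr_of_eventuallyEq (Filter.Eventually.of_forall fun x => rfl)
  push_cast
  simp [Nat.add_sub_cancel]

lemma gsat_lipschitz (m : ℕ) {R : ℝ} (hR : 0 < R) {s t : ℝ}
    (hs : s ∈ Set.Icc 0 (R ^ 2)) (ht : t ∈ Set.Icc 0 (R ^ 2)) :
    |gsat m s - gsat m t| ≤ ((m : ℝ) + 1) * R ^ (2 * m) * |s - t| := by
  have hconv : Convex ℝ (Set.Icc (0 : ℝ) (R ^ 2)) := convex_Icc _ _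
  have hderiv : ∀ x ∈ Set.Icc (0 : ℝ) (R ^ 2),
      HasDerivWithinAt (gsat m)
        (((((m : ℝ) + 1) * x ^ m * (1 + x) - x ^ (m + 1))) / (1 + x) ^ 2)
        (Set.Icc 0 (R ^ 2)) x := fun x hx =>
    (gsat_hasDerivAt m hx.1).hasDerivWithinAt
  have hbound : ∀ x ∈ Set.Icc (0 : ℝ) (R ^ 2),
      ‖(((m : ℝ) + 1) * x ^ m * (1 + x) - x ^ (m + 1)) / (1 + x) ^ 2‖
        ≤ ((m : ℝ) + 1) * R ^ (2 * m) := by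
    intro x hx
    obtain ⟨hx0, hxR⟩ := hx
    have hxm : (0 : ℝ) ≤ x ^ m := by positivity
    have h1x : (0 : ℝ) < (1 + x) ^ 2 := by positivity
    have hm0 : (0 : ℝ) ≤ (m : ℝ) := Nat.cast_nonneg m
    have hnum : (0 : ℝ) ≤ ((m : ℝ) + 1) * x ^ m * (1 + x) - x ^ (m + 1) := by
      have : x ^ (m + 1) = x ^ m * x := pow_succ x m
      nlinarith [mul_nonneg hxm hx0, mul_nonneg (mul_nonneg hm0 hxm) hx0]
    rw [Real.norm_eq_abs, abs_of_nonneg (by positivity)]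
    rw [div_le_iff₀ h1x]
    have hxRm : x ^ m ≤ (R ^ 2) ^ m := pow_le_pow_left₀ hx0 hxR m
    have hR2m : (R ^ 2) ^ m = R ^ (2 * m) := by rw [← pow_mul, mul_comm]
    have key : x ^ m ≤ R ^ (2 * m) := hR2m ▸ hxRm
    have hxs : x ^ (m + 1) = x ^ m * x := pow_succ x m
    nlinarith [mul_le_mul_of_nonneg_right key h1x.le, mul_nonneg hxm hx0,
      mul_nonneg (mul_nonneg hm0 hxm) hx0, sq_nonneg x,
      mul_nonneg (mul_nonneg hxm hx0) hx0,
      mul_nonneg (mul_nonneg (mul_nonneg hm0 hxm) hx0) hx0]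
  have := hconv.norm_image_sub_le_of_norm_hasDerivWithin_le hderiv hbound ht hs
  simpa [Real.norm_eq_abs] using this

lemma Trem_eq (m : ℕ) (z : ℂ) :
    Trem m z = ((gsat m (‖z‖ ^ 2) : ℝ) : ℂ) * z := by
  have h0 : (1 + ‖z‖ ^ 2 : ℝ) ≠ 0 := by positivity
  have h : ((1 + ‖z‖ ^ 2 : ℝ) : ℂ) ≠ 0 := by exact_mod_cast h0
  rw [Trem, gsat, pow_mul]
  push_cast
  field_simp

lemma Trem_lip (m : ℕ) {R : ℝ} (hR : 0 < R) {z w : ℂ}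
    (hz : ‖z‖ ≤ R) (hw : ‖w‖ ≤ R) :
    ‖Trem m z - Trem m w‖ ≤ ((2 * (m : ℝ) + 3) * R ^ (2 * m + 2)) * ‖z - w‖ := by
  set s := ‖z‖ ^ 2 with hs_def
  set t := ‖w‖ ^ 2 with ht_def
  have hzn : (0 : ℝ) ≤ ‖z‖ := norm_nonneg z
  have hwn : (0 : ℝ) ≤ ‖w‖ := norm_nonneg w
  have hs : s ∈ Set.Icc (0 : ℝ) (R ^ 2) :=
    ⟨by positivity, by nlinarith⟩
  have ht : t ∈ Set.Icc (0 : ℝ) (R ^ 2) :=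
    ⟨by positivity, by nlinarith⟩
  have hdecomp : Trem m z - Trem m w
      = ((gsat m s : ℝ) : ℂ) * (z - w) + (((gsat m s - gsat m t : ℝ)) : ℂ) * w := by
    rw [Trem_eq, Trem_eq]; push_cast; ring
  have hD : (0 : ℝ) ≤ ‖z - w‖ := norm_nonneg _
  -- bound |gsat m s|
  have hga : |gsat m s| ≤ R ^ (2 * m + 2) := by
    have h1 : gsat m s ≤ s ^ (m + 1) := by
      rw [gsat]
      exact div_le_self (by positivity) (by nlinarith [hs.1])
    have h2 : (0 : ℝ) ≤ gsat m s := by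
      rw [gsat]; positivity
    have h3 : s ^ (m + 1) ≤ (R ^ 2) ^ (m + 1) := pow_le_pow_left₀ hs.1 hs.2 _
    have h4 : (R ^ 2) ^ (m + 1) = R ^ (2 * m + 2) := by
      rw [← pow_mul]; ring_nf
    rw [abs_of_nonneg h2]
    linarith [h4 ▸ h3]
  -- bound |s - t|
  have hst : |s - t| ≤ 2 * R * ‖z - w‖ := by
    have h1 : |‖z‖ - ‖w‖| ≤ ‖z - w‖ := abs_norm_sub_norm_le z w
    have h2 : |s - t| = |‖z‖ - ‖w‖| * (‖z‖ + ‖w‖) := by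
      rw [show s - t = (‖z‖ - ‖w‖) * (‖z‖ + ‖w‖) by rw [hs_def, ht_def]; ring,
        abs_mul, abs_of_nonneg (show (0:ℝ) ≤ ‖z‖ + ‖w‖ by positivity)]
    rw [h2]
    have h3 : ‖z‖ + ‖w‖ ≤ 2 * R := by linarith
    calc |‖z‖ - ‖w‖| * (‖z‖ + ‖w‖) ≤ ‖z - w‖ * (2 * R) :=
          mul_le_mul h1 h3 (by positivity) hD
      _ = 2 * R * ‖z - w‖ := by ring
  have hlip := gsat_lipschitz m hR hs ht
  have hterm2 : |gsat m s - gsat m t| * ‖w‖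
      ≤ ((m : ℝ) + 1) * R ^ (2 * m) * (2 * R * ‖z - w‖) * R := by
    have hb : |gsat m s - gsat m t| ≤ ((m : ℝ) + 1) * R ^ (2 * m) * (2 * R * ‖z - w‖) :=
      hlip.trans (by
        apply mul_le_mul_of_nonneg_left hst
        positivity)
    exact mul_le_mul hb hw hwn (by positivity)
  have hpow : R ^ (2 * m + 2) = R ^ (2 * m) * R ^ 2 := by rw [pow_add]
  calc ‖Trem m z - Trem m w‖
      ≤ |gsat m s| * ‖z - w‖ + |gsat m s - gsat m t| * ‖w‖ := by
        rw [hdecomp]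
        refine (norm_add_le _ _).trans ?_
        rw [norm_mul, norm_mul, Complex.norm_real, Complex.norm_real,
          Real.norm_eq_abs, Real.norm_eq_abs]
    _ ≤ R ^ (2 * m + 2) * ‖z - w‖ + ((m : ℝ) + 1) * R ^ (2 * m) * (2 * R * ‖z - w‖) * R := by
        gcongr
    _ = ((2 * (m : ℝ) + 3) * R ^ (2 * m + 2)) * ‖z - w‖ := by rw [hpow]; ring

/-- The remainder term is Lipschitz on the closed ball of radius `R` of
`ℓ²(ℤ^N)` with Lipschitz constant `(2m+3)R^{2m+2} + 2R^{2m+4}`. -/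
theorem remainder_lipschitz_on_ball {N : ℕ} (hN : 0 < N) (m : ℕ) (hm : 1 ≤ m)
    (R : ℝ) (hR : 0 < R) (ζ ξ : Zn N → ℂ)
    (hζ : Summable fun n => ‖ζ n‖ ^ 2) (hξ : Summable fun n => ‖ξ n‖ ^ 2)
    (hζR : ∑' n, ‖ζ n‖ ^ 2 ≤ R ^ 2) (hξR : ∑' n, ‖ξ n‖ ^ 2 ≤ R ^ 2) :
    ∑' n, ‖Trem m (ζ n) - Trem m (ξ n)‖ ^ 2
      ≤ ((2 * m + 3 : ℝ) * R ^ (2 * m + 2) + 2 * R ^ (2 * m + 4)) ^ 2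
          * ∑' n, ‖ζ n - ξ n‖ ^ 2 := by
  set K : ℝ := (2 * m + 3 : ℝ) * R ^ (2 * m + 2) + 2 * R ^ (2 * m + 4) with hK
  have hK0 : (0 : ℝ) ≤ K := by positivity
  have hζn : ∀ n, ‖ζ n‖ ≤ R := by
    intro n
    have h1 : ‖ζ n‖ ^ 2 ≤ R ^ 2 :=
      le_trans (Summable.le_tsum hζ n fun j _ => by positivity) hζR
    nlinarith [norm_nonneg (ζ n)]
  have hξn : ∀ n, ‖ξ n‖ ≤ R := by
    intro n
    have h1 : ‖ξ n‖ ^ 2 ≤ R ^ 2 :=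
      le_trans (Summable.le_tsum hξ n fun j _ => by positivity) hξR
    nlinarith [norm_nonneg (ξ n)]
  have hpt : ∀ n, ‖Trem m (ζ n) - Trem m (ξ n)‖ ^ 2 ≤ K ^ 2 * ‖ζ n - ξ n‖ ^ 2 := by
    intro n
    have h := Trem_lip m hR (hζn n) (hξn n)
    have hle : (2 * (m : ℝ) + 3) * R ^ (2 * m + 2) ≤ K := by
      rw [hK]; nlinarith [pow_pos hR (2 * m + 4)]
    have h2 : ‖Trem m (ζ n) - Trem m (ξ n)‖ ≤ K * ‖ζ n - ξ n‖ := by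
      exact h.trans (mul_le_mul_of_nonneg_right hle (norm_nonneg _))
    calc ‖Trem m (ζ n) - Trem m (ξ n)‖ ^ 2
        ≤ (K * ‖ζ n - ξ n‖) ^ 2 := pow_le_pow_left₀ (norm_nonneg _) h2 2
      _ = K ^ 2 * ‖ζ n - ξ n‖ ^ 2 := by ring
  have hsum_diff : Summable fun n => ‖ζ n - ξ n‖ ^ 2 := by
    refine Summable.of_nonneg_of_le (fun n => by positivity) (fun n => ?_)
      ((hζ.mul_left 2).add (hξ.mul_left 2))
    have h := pow_le_pow_left₀ (norm_nonneg _) (norm_sub_le (ζ n) (ξ n)) 2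
    nlinarith [sq_nonneg (‖ζ n‖ - ‖ξ n‖)]
  have hsum_lhs : Summable fun n => ‖Trem m (ζ n) - Trem m (ξ n)‖ ^ 2 :=
    Summable.of_nonneg_of_le (fun n => by positivity) hpt (hsum_diff.mul_left _)
  calc ∑' n, ‖Trem m (ζ n) - Trem m (ξ n)‖ ^ 2
      ≤ ∑' n, K ^ 2 * ‖ζ n - ξ n‖ ^ 2 :=
        Summable.tsum_le_tsum hpt hsum_lhs (hsum_diff.mul_left _)
    _ = K ^ 2 * ∑' n, ‖ζ n - ξ n‖ ^ 2 := tsum_mul_left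
end
end

section
/- Let N, K be positive integers, ε > 0, β > 0, σ > 0, and Ω > 4εN. If φ ∈ ℓ²(ℤ^N_K), φ ≠ 0, satisfies −ε(Δ_d φ)_n + β |φ_n|^{2σ} φ_n = Ω φ_n for all n with ‖n‖_∞ ≤ K (where φ_n = 0 for ‖n‖_∞ > K), then its power R² = Σ_{‖n‖_∞ ≤ K} |φ_n|² satisfies R^{2σ} ≥ (Ω − 4Nε)/β, i.e. [ (Ω − 4Nε)/β ]^{1/σ} ≤ R². -/
open scoped BigOperators
noncomputable section

lemma sum_le_support {α : Type*} [DecidableEq α] (X B : Finset α) (f : α → ℝ)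
    (h0 : ∀ m, m ∉ B → f m = 0) (hnn : ∀ m, 0 ≤ f m) :
    ∑ m ∈ X, f m ≤ ∑ m ∈ B, f m := by
  have h1 : ∑ m ∈ X, f m = ∑ m ∈ X ∩ B, f m := by
    refine (Finset.sum_subset Finset.inter_subset_left ?_).symm
    intro x hx hx2
    exact h0 x (fun hBm => hx2 (Finset.mem_inter.mpr ⟨hx, hBm⟩))
  rw [h1]
  exact Finset.sum_le_sum_of_subset_of_nonneg Finset.inter_subset_right
    (fun i _ _ => hnn i)

lemma shift_sum_le {N : ℕ} (B : Finset (Zn N)) (f : Zn N → ℝ)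
    (h0 : ∀ m, m ∉ B → f m = 0) (hnn : ∀ m, 0 ≤ f m) (c : Zn N) :
    ∑ n ∈ B, f (n + c) ≤ ∑ n ∈ B, f n := by
  have h1 : ∑ n ∈ B, f (n + c) = ∑ m ∈ B.image (· + c), f m :=
    (Finset.sum_image (fun a _ b _ h => add_left_injective c h)).symm
  rw [h1]
  exact sum_le_support _ _ f h0 hnn

/-- Lower bound on the power of nontrivial breather solutions of the defocusing
DNLS with power nonlinearity on the finite lattice, for frequencies `Ω > 4εN`:
`R^{2σ} ≥ (Ω − 4Nε)/β`, i.e. `[(Ω − 4Nε)/β]^{1/σ} ≤ R²`. -/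
theorem power_lower_bound_defocusing {N K : ℕ} (hN : 0 < N) (hK : 0 < K)
    (ε β σ Ω : ℝ) (hε : 0 < ε) (hβ : 0 < β) (hσ : 0 < σ)
    (hΩ : 4 * ε * N < Ω)
    (φ : Zn N → ℂ) (hsupp : suppIn K φ) (hne : φ ≠ 0)
    (heq : ∀ n : Zn N, inBox K n →
      -(ε : ℂ) * dLap φ n + (β : ℂ) * ((‖φ n‖ ^ (2 * σ) : ℝ) : ℂ) * φ n
        = (Ω : ℂ) * φ n) :
    (Ω - 4 * N * ε) / β ≤ (∑' n, ‖φ n‖ ^ 2) ^ σ ∧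
    ((Ω - 4 * N * ε) / β) ^ (1 / σ) ≤ ∑' n, ‖φ n‖ ^ 2 := by
  classical
  set B : Finset (Zn N) := Finset.Icc (fun _ => -(K:ℤ)) (fun _ => (K:ℤ)) with hB
  have hmem : ∀ n : Zn N, n ∈ B ↔ inBox K n := by
    intro n
    simp [hB, Finset.mem_Icc, Pi.le_def, inBox, abs_le, forall_and]
  have hsupp' : ∀ n, n ∉ B → φ n = 0 := fun n hn =>
    hsupp n (fun h => hn ((hmem n).mpr h))
  set P : ℝ := ∑ n ∈ B, ‖φ n‖^2 with hP
  have htsum : ∑' n, ‖φ n‖ ^ 2 = P := by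
    rw [hP]
    exact tsum_eq_sum (fun n hn => by rw [hsupp' n hn]; simp)
  have hPpos : 0 < P := by
    obtain ⟨m, hm⟩ := Function.ne_iff.mp hne
    have hmB : m ∈ B := (hmem m).mpr (by
      by_contra h; exact hm (hsupp m h))
    exact Finset.sum_pos' (fun i _ => sq_nonneg _)
      ⟨m, hmB, pow_pos (norm_pos_iff.mpr hm) 2⟩
  -- pointwise identity
  have key : ∀ n ∈ B,
      ε * (-(dLap φ n * (starRingEnd ℂ) (φ n))).re
        + β * (‖φ n‖ ^ (2*σ) * ‖φ n‖^2) = Ω * ‖φ n‖^2 := by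
    intro n hn
    have h := heq n ((hmem n).mp hn)
    have h2 := congrArg (fun z => (z * (starRingEnd ℂ) (φ n)).re) h
    simp only [add_mul, neg_mul, mul_assoc, Complex.mul_conj'] at h2
    simp only [Complex.add_re, Complex.neg_re, ← Complex.ofReal_pow,
      ← Complex.ofReal_mul, Complex.re_ofReal_mul, Complex.ofReal_re] at h2
    rw [Complex.neg_re]; linarith [h2]
  set A : ℝ := ∑ n ∈ B, (-(dLap φ n * (starRingEnd ℂ) (φ n))).re with hA
  set T : ℝ := ∑ n ∈ B, ‖φ n‖ ^ (2*σ) * ‖φ n‖^2 with hT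
  have hsum : ε * A + β * T = Ω * P := by
    rw [hA, hT, hP, Finset.mul_sum, Finset.mul_sum, Finset.mul_sum,
      ← Finset.sum_add_distrib]
    exact Finset.sum_congr rfl key
  have hAle : A ≤ 4 * N * P := by
    have hterm : ∀ n ∈ B, (-(dLap φ n * (starRingEnd ℂ) (φ n))).re ≤
        ∑ ν : Fin N, (3 * ‖φ n‖^2 + ‖φ (n + evec ν)‖^2 / 2 + ‖φ (n - evec ν)‖^2 / 2) := by
      intro n _
      rw [dLap, Finset.sum_mul, ← Finset.sum_neg_distrib, Complex.re_sum]
      apply Finset.sum_le_sum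
      intro ν _
      set a := φ (n + evec ν); set b := φ (n - evec ν); set c := φ n
      have h1 : (-((a + b - 2*c) * (starRingEnd ℂ) c)).re ≤ ‖a + b - 2*c‖ * ‖c‖ := by
        calc (-((a + b - 2*c) * (starRingEnd ℂ) c)).re
            ≤ ‖-((a + b - 2*c) * (starRingEnd ℂ) c)‖ := Complex.re_le_norm _
          _ = ‖a + b - 2*c‖ * ‖c‖ := by rw [norm_neg, norm_mul, RCLike.norm_conj]
      have h2 : ‖a + b - 2*c‖ ≤ ‖a‖ + ‖b‖ + 2*‖c‖ := by
        calc ‖a + b - 2*c‖ ≤ ‖a + b‖ + ‖2*c‖ := norm_sub_le _ _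
          _ ≤ ‖a‖ + ‖b‖ + 2*‖c‖ := by
              have h3 := norm_add_le a b
              have h4 : ‖(2:ℂ)*c‖ = 2*‖c‖ := by
                rw [norm_mul]; norm_num
              linarith
      have h5 := mul_le_mul_of_nonneg_right h2 (norm_nonneg c)
      nlinarith [norm_nonneg a, norm_nonneg b, norm_nonneg c,
        sq_nonneg (‖a‖ - ‖c‖), sq_nonneg (‖b‖ - ‖c‖)]
    have h3 : A ≤ ∑ n ∈ B, ∑ ν : Fin N,
        (3 * ‖φ n‖^2 + ‖φ (n + evec ν)‖^2/2 + ‖φ (n - evec ν)‖^2/2) :=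
      Finset.sum_le_sum hterm
    rw [Finset.sum_comm] at h3
    have h4 : ∀ ν : Fin N, ∑ n ∈ B,
        (3 * ‖φ n‖^2 + ‖φ (n + evec ν)‖^2/2 + ‖φ (n - evec ν)‖^2/2) ≤ 4 * P := by
      intro ν
      have hf0 : ∀ m, m ∉ B → ‖φ m‖^2 = 0 := fun m hm => by rw [hsupp' m hm]; simp
      have hfnn : ∀ m : Zn N, 0 ≤ ‖φ m‖^2 := fun m => sq_nonneg _
      have s1 : ∑ n ∈ B, ‖φ (n + evec ν)‖^2 ≤ P := shift_sum_le B _ hf0 hfnn (evec ν)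
      have s2 : ∑ n ∈ B, ‖φ (n - evec ν)‖^2 ≤ P := by
        have := shift_sum_le B (fun m => ‖φ m‖^2) hf0 hfnn (-(evec ν))
        simpa [sub_eq_add_neg] using this
      rw [Finset.sum_add_distrib, Finset.sum_add_distrib, ← Finset.mul_sum,
        ← Finset.sum_div, ← Finset.sum_div]
      rw [hP] at *
      linarith
    calc A ≤ ∑ ν : Fin N, ∑ n ∈ B,
          (3 * ‖φ n‖^2 + ‖φ (n + evec ν)‖^2/2 + ‖φ (n - evec ν)‖^2/2) := h3
      _ ≤ ∑ ν : Fin N, 4 * P := Finset.sum_le_sum (fun ν _ => h4 ν)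
      _ = 4 * N * P := by simp [Finset.sum_const]; ring
  have hβT : (Ω - 4 * N * ε) * P ≤ β * T := by nlinarith [mul_le_mul_of_nonneg_left hAle hε.le]
  have hTle : T ≤ P ^ σ * P := by
    rw [hT, hP, Finset.mul_sum]
    apply Finset.sum_le_sum
    intro n hn
    have hle : ‖φ n‖^2 ≤ P := by
      rw [hP]; exact Finset.single_le_sum (fun i _ => sq_nonneg (‖φ i‖)) hn
    have h1 : ‖φ n‖ ^ (2*σ) = ((‖φ n‖^2 : ℝ)) ^ σ := by
      rw [← Real.rpow_natCast (‖φ n‖) 2, ← Real.rpow_mul (norm_nonneg _)]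
      norm_num
    rw [h1]
    exact mul_le_mul_of_nonneg_right (Real.rpow_le_rpow (sq_nonneg _) hle hσ.le) (sq_nonneg _)
  have h5 : (Ω - 4 * N * ε) * P ≤ (β * P ^ σ) * P := by nlinarith [hβ.le]
  have hfin1 : (Ω - 4 * N * ε) / β ≤ P ^ σ := by
    rw [div_le_iff₀ hβ]
    have := le_of_mul_le_mul_right h5 hPpos
    linarith
  have hq : 0 ≤ (Ω - 4 * N * ε) / β := div_nonneg (by nlinarith) hβ.le
  have hfin2 : ((Ω - 4 * N * ε) / β) ^ (1/σ) ≤ P := by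
    have h6 := Real.rpow_le_rpow hq hfin1 (by positivity : (0:ℝ) ≤ 1/σ)
    rwa [← Real.rpow_mul hPpos.le, mul_one_div_cancel hσ.ne', Real.rpow_one] at h6
  rw [htsum]
  exact ⟨hfin1, hfin2⟩
end
end

section
/- Let N be a positive integer, ε > 0, Λ > 0, ω > 0 and σ > 0. If φ ∈ ℓ²(ℤ^N), φ ≠ 0, satisfies −ε(Δ_d φ)_n + ω φ_n = Λ |φ_n|^{2σ} φ_n for all n ∈ ℤ^N, then its power satisfies ‖φ‖₂² ≥ [ ω / (Λ(2σ+1)) ]^{1/σ}. Equivalently, if ‖φ‖₂^{2σ} < ω / (Λ(2σ+1)), then φ = 0. -/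
open scoped BigOperators
noncomputable section

/-- Threshold for the power of nontrivial breather solutions
`ψ_n(t) = e^{iωt}φ_n` of the focusing DNLS with power nonlinearity on the
infinite lattice: `‖φ‖₂² ≥ [ω/(Λ(2σ+1))]^{1/σ}`. -/
theorem power_threshold_focusing_power {N : ℕ} (hN : 0 < N)
    (ε Λ ω σ : ℝ) (hε : 0 < ε) (hΛ : 0 < Λ) (hω : 0 < ω) (hσ : 0 < σ)
    (φ : Zn N → ℂ) (hφ : Summable fun n => ‖φ n‖ ^ 2) (hne : φ ≠ 0)
    (heq : ∀ n : Zn N,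
      -(ε : ℂ) * dLap φ n + (ω : ℂ) * φ n
        = (Λ : ℂ) * ((‖φ n‖ ^ (2 * σ) : ℝ) : ℂ) * φ n) :
    (ω / (Λ * (2 * σ + 1))) ^ (1 / σ) ≤ ∑' n, ‖φ n‖ ^ 2 := by
  -- a point where φ is nonzero
  obtain ⟨n₁, hn₁⟩ := Function.ne_iff.mp hne
  set c : ℝ := ‖φ n₁‖ with hc_def
  have hc : 0 < c := by simpa [hc_def] using norm_pos_iff.mpr hn₁
  -- the set where ‖φ‖ ≥ c is finite
  have hfin : {n : Zn N | c ≤ ‖φ n‖}.Finite := by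
    have h1 : ∀ᶠ n in Filter.cofinite, ‖φ n‖ ^ 2 < c ^ 2 :=
      hφ.tendsto_cofinite_zero.eventually (gt_mem_nhds (by positivity))
    refine (Filter.eventually_cofinite.mp h1).subset ?_
    intro n hn
    simp only [Set.mem_setOf_eq, not_lt]
    exact pow_le_pow_left₀ hc.le hn 2
  obtain ⟨n₀, hn₀S, hmax⟩ := hfin.toFinset.exists_max_image (fun n => ‖φ n‖)
    ⟨n₁, by simp [hc_def]⟩
  set M : ℝ := ‖φ n₀‖ with hM_def
  have hcM : c ≤ M := by simpa using hfin.mem_toFinset.mp hn₀S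
  have hM : 0 < M := lt_of_lt_of_le hc hcM
  have hglob : ∀ n, ‖φ n‖ ≤ M := by
    intro n
    by_cases h : c ≤ ‖φ n‖
    · exact hmax n (hfin.mem_toFinset.mpr h)
    · exact (not_le.mp h).le.trans hcM
  -- take real part of conj(φ n₀) * equation at n₀
  set a : ℂ := φ n₀ with ha_def
  have hre : ∀ m : Zn N, ((starRingEnd ℂ) a * φ m).re ≤ M ^ 2 := by
    intro m
    calc ((starRingEnd ℂ) a * φ m).re ≤ ‖(starRingEnd ℂ) a * φ m‖ := Complex.re_le_norm _
    _ = M * ‖φ m‖ := by rw [norm_mul, RCLike.norm_conj]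
    _ ≤ M * M := by exact mul_le_mul_of_nonneg_left (hglob m) hM.le
    _ = M ^ 2 := (sq M).symm
  have haa : (starRingEnd ℂ) a * a = ((M ^ 2 : ℝ) : ℂ) := by
    rw [mul_comm, Complex.mul_conj]
    congr 1
    rw [Complex.normSq_eq_norm_sq, hM_def]
  -- the Laplacian term has nonpositive real part against conj a
  have hlap : ((starRingEnd ℂ) a * dLap φ n₀).re ≤ 0 := by
    rw [dLap, Finset.mul_sum, Complex.re_sum]
    apply Finset.sum_nonpos
    intro ν _
    have e1 := hre (n₀ + evec ν)
    have e2 := hre (n₀ - evec ν)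
    have : (starRingEnd ℂ) a * (φ (n₀ + evec ν) + φ (n₀ - evec ν) - 2 * φ n₀)
        = (starRingEnd ℂ) a * φ (n₀ + evec ν) + (starRingEnd ℂ) a * φ (n₀ - evec ν)
          - 2 * ((starRingEnd ℂ) a * a) := by ring
    rw [this]
    simp only [Complex.sub_re, Complex.add_re, haa]
    have : ((2 : ℂ) * ((M ^ 2 : ℝ) : ℂ)).re = 2 * M ^ 2 := by
      norm_cast
    rw [this]
    linarith
  have key : ω * M ^ 2 ≤ Λ * M ^ (2 * σ) * M ^ 2 := by
    have h := congrArg (fun z => ((starRingEnd ℂ) a * z).re) (heq n₀)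
    simp only [mul_add, mul_sub] at h
    have hL : ((starRingEnd ℂ) a * (-(ε:ℂ) * dLap φ n₀ + (ω:ℂ) * φ n₀)).re
        = -ε * ((starRingEnd ℂ) a * dLap φ n₀).re + ω * M ^ 2 := by
      have : (starRingEnd ℂ) a * (-(ε:ℂ) * dLap φ n₀ + (ω:ℂ) * φ n₀)
          = ((-ε : ℝ) : ℂ) * ((starRingEnd ℂ) a * dLap φ n₀)
            + ((ω : ℝ) : ℂ) * ((starRingEnd ℂ) a * a) := by
        push_cast; ring
      rw [this, Complex.add_re, Complex.re_ofReal_mul, Complex.re_ofReal_mul, haa]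
      rw [Complex.ofReal_re]
    have hR : ((starRingEnd ℂ) a * ((Λ : ℂ) * ((M ^ (2 * σ) : ℝ) : ℂ) * a)).re
        = Λ * M ^ (2 * σ) * M ^ 2 := by
      have : (starRingEnd ℂ) a * ((Λ : ℂ) * ((M ^ (2 * σ) : ℝ) : ℂ) * a)
          = ((Λ * M ^ (2 * σ) : ℝ) : ℂ) * ((starRingEnd ℂ) a * a) := by
        push_cast; ring
      rw [this, Complex.re_ofReal_mul, haa]
      norm_cast
    have h' : -ε * ((starRingEnd ℂ) a * dLap φ n₀).re + ω * M ^ 2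
        = Λ * M ^ (2 * σ) * M ^ 2 := by
      rw [← hL, ← hR]; exact congrArg (fun z => ((starRingEnd ℂ) a * z).re) (heq n₀)
    nlinarith [mul_nonneg hε.le (neg_nonneg.mpr hlap)]
  have hM2 : (0:ℝ) < M ^ 2 := by positivity
  have key2 : ω ≤ Λ * M ^ (2 * σ) := le_of_mul_le_mul_right (by linarith [key]) hM2
  -- conclude
  have h2σ1 : (1:ℝ) ≤ 2 * σ + 1 := by linarith
  have hbase : ω / (Λ * (2 * σ + 1)) ≤ M ^ (2 * σ) := by
    rw [div_le_iff₀ (by positivity)]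
    calc ω ≤ Λ * M ^ (2 * σ) := key2
    _ ≤ Λ * M ^ (2 * σ) * (2 * σ + 1) := by
        nlinarith [Real.rpow_nonneg hM.le (2*σ)]
    _ = M ^ (2 * σ) * (Λ * (2 * σ + 1)) := by ring
  have hrpow : (ω / (Λ * (2 * σ + 1))) ^ (1 / σ) ≤ (M ^ (2 * σ)) ^ ((1:ℝ) / σ) :=
    Real.rpow_le_rpow (by positivity) hbase (by positivity)
  have hMcalc : (M ^ (2 * σ)) ^ ((1:ℝ) / σ) = M ^ (2:ℕ) := by
    rw [← Real.rpow_natCast M 2, ← Real.rpow_mul hM.le]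
    congr 1
    field_simp
    norm_num
  have hle : M ^ (2:ℕ) ≤ ∑' n, ‖φ n‖ ^ 2 := by
    have := Summable.le_tsum hφ n₀ (fun j _ => by positivity)
    simpa [hM_def] using this
  calc (ω / (Λ * (2 * σ + 1))) ^ (1 / σ) ≤ (M ^ (2 * σ)) ^ ((1:ℝ) / σ) := hrpow
  _ = M ^ (2:ℕ) := hMcalc
  _ ≤ _ := hle
end
end
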